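/- Let α_1, …, α_d ≥ 0 with Σ_i α_i² = 1, and let ψ = Σ_i α_i e_i ⊗ e_i ∈ ℂ^d ⊗ ℂ^d (a state in Schmidt form). Set E := (Σ_i α_i)² − 1 and assume E > 0. Define ρ⁻ := (1/E) Σ_{i ≠ j} α_i α_j |e_i ⊗ e_j⟩⟨e_i ⊗ e_j| and ρ⁺ := (|ψ⟩⟨ψ| + E·ρ⁻)/(1 + E). Then ρ⁻ and ρ⁺ are separable density matrices and |ψ⟩⟨ψ| = (1 + E)·ρ⁺ − E·ρ⁻. -/

import Mathlib

open Matrix Complex Kronecker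
open scoped ComplexOrder

noncomputable section

/-- A density matrix: positive semidefinite with trace 1. -/
def IsDensityMatrix {d : Type*} [Fintype d] (ρ : Matrix d d ℂ) : Prop :=
  ρ.PosSemidef ∧ ρ.trace = 1

/-- A separable state on a bipartite system: a finite convex combination of Kronecker
products of density matrices. -/
def SeparableState {dA dB : Type*} [Fintype dA] [Fintype dB]
    (ρ : Matrix (dA × dB) (dA × dB) ℂ) : Prop :=
  ∃ (n : ℕ) (p : Fin n → ℝ) (σ : Fin n → Matrix dA dA ℂ) (τ : Fin n → Matrix dB dB ℂ),
    (∀ k, 0 ≤ p k) ∧ (∑ k, p k) = 1 ∧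
    (∀ k, IsDensityMatrix (σ k)) ∧ (∀ k, IsDensityMatrix (τ k)) ∧
    ρ = ∑ k, (p k : ℂ) • ((σ k) ⊗ₖ (τ k))

/-- The robustness of entanglement. -/
def robustness {dA dB : Type*} [Fintype dA] [Fintype dB]
    (ρ : Matrix (dA × dB) (dA × dB) ℂ) : ℝ :=
  sInf { t : ℝ | 0 ≤ t ∧ ∃ σ : Matrix (dA × dB) (dA × dB) ℂ,
    SeparableState σ ∧ SeparableState (((1 + t : ℝ) : ℂ)⁻¹ • (ρ + (t : ℂ) • σ)) }

/-- γ(ρ): optimal one-norm of a quasiprobability decomposition into separable states. -/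
def gammaSep {dA dB : Type*} [Fintype dA] [Fintype dB]
    (ρ : Matrix (dA × dB) (dA × dB) ℂ) : ℝ :=
  sInf { c : ℝ | ∃ (ap am : ℝ) (ρp ρm : Matrix (dA × dB) (dA × dB) ℂ),
    0 ≤ ap ∧ 0 ≤ am ∧ SeparableState ρp ∧ SeparableState ρm ∧
    ρ = (ap : ℂ) • ρp - (am : ℂ) • ρm ∧ c = ap + am }

/-- Singular values of a complex matrix: square roots of eigenvalues of `Mᴴ * M`. -/
def singularValues {m n : Type*} [Fintype m] [Fintype n] [DecidableEq n]
    (M : Matrix m n ℂ) : n → ℝ :=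
  fun i => Real.sqrt ((Matrix.isHermitian_conjTranspose_mul_self M).eigenvalues i)

/-! ### Auxiliary lemmas -/

lemma posSemidef_vecMulVec_star {n : Type*} [Fintype n] (v : n → ℂ) :
    (vecMulVec v (star v)).PosSemidef := by
  rw [vecMulVec_eq Unit, ← conjTranspose_replicateCol]
  exact posSemidef_self_mul_conjTranspose _

lemma trace_vecMulVec_star {n : Type*} [Fintype n] (v : n → ℂ) :
    (vecMulVec v (star v)).trace = ∑ i, v i * (starRingEnd ℂ) (v i) := by
  simp [Matrix.trace, Matrix.diag, vecMulVec_apply]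

lemma posSemidef_real_smul {n : Type*} [Fintype n] {M : Matrix n n ℂ} (hM : M.PosSemidef)
    {r : ℝ} (hr : 0 ≤ r) : ((r : ℂ) • M).PosSemidef := by
  constructor
  · unfold Matrix.IsHermitian
    rw [conjTranspose_smul, hM.1.eq]
    congr 1
    simp
  · exact (hM.smul (a := (r : ℂ)) (by exact_mod_cast hr)).2

lemma vecMulVec_kron {dA dB : Type*} [Fintype dA] [Fintype dB] (u : dA → ℂ) (v : dB → ℂ) :
    (vecMulVec u (star u)) ⊗ₖ (vecMulVec v (star v)) =
    vecMulVec (fun p : dA × dB => u p.1 * v p.2) (star fun p : dA × dB => u p.1 * v p.2) := by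
  ext ⟨i,j⟩ ⟨k,l⟩
  simp [vecMulVec_apply, Pi.star_apply, star_mul']
  ring

lemma separable_of_sum {dA dB ι : Type*} [Fintype dA] [Fintype dB] [Fintype ι]
    (p : ι → ℝ) (σ : ι → Matrix dA dA ℂ) (τ : ι → Matrix dB dB ℂ)
    (hp : ∀ k, 0 ≤ p k) (hsum : ∑ k, p k = 1)
    (hσ : ∀ k, IsDensityMatrix (σ k)) (hτ : ∀ k, IsDensityMatrix (τ k))
    {ρ : Matrix (dA × dB) (dA × dB) ℂ} (hρ : ρ = ∑ k, (p k : ℂ) • ((σ k) ⊗ₖ (τ k))) :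
    SeparableState ρ := by
  refine ⟨Fintype.card ι, p ∘ (Fintype.equivFin ι).symm,
    σ ∘ (Fintype.equivFin ι).symm, τ ∘ (Fintype.equivFin ι).symm,
    fun k => hp _, ?_, fun k => hσ _, fun k => hτ _, ?_⟩
  · rw [← hsum]; exact Equiv.sum_comp (Fintype.equivFin ι).symm p
  · rw [hρ]; exact (Equiv.sum_comp (Fintype.equivFin ι).symm _).symm

lemma isDensity_stdBasis {n : Type*} [Fintype n] [DecidableEq n] (i : n) :
    IsDensityMatrix (single i i (1:ℂ)) := by
  constructor
  · have h : single i i (1:ℂ) = vecMulVec (Pi.single i 1) (star (Pi.single i 1)) := by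
      ext a b
      by_cases ha : i = a <;> by_cases hb : i = b <;>
        simp [single, vecMulVec_apply, Pi.single_apply, ha, hb] <;>
        split_ifs <;> tauto
    rw [h]; exact posSemidef_vecMulVec_star _
  · simp [Matrix.trace, Matrix.diag, single]

lemma stdBasis_kron {dA dB : Type*} [Fintype dA] [Fintype dB] [DecidableEq dA] [DecidableEq dB]
    (i : dA) (j : dB) :
    single i i (1:ℂ) ⊗ₖ single j j 1 = single (i,j) (i,j) 1 := by
  ext ⟨a,b⟩ ⟨c,e⟩
  by_cases h1 : i = a <;> by_cases h2 : j = b <;> by_cases h3 : i = c <;> by_cases h4 : j = e <;>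
    simp [single, h1, h2, h3, h4, Prod.ext_iff] <;> split_ifs <;> tauto

lemma omega_facts :
    ∃ ω : ℂ, IsPrimitiveRoot ω 5 ∧ ‖ω‖ = 1 := by
  refine ⟨Complex.exp (2 * Real.pi * Complex.I / 5), Complex.isPrimitiveRoot_exp 5 (by norm_num), ?_⟩
  rw [show (2 * (Real.pi:ℂ) * Complex.I / 5 : ℂ) = ((2 * Real.pi / 5 : ℝ):ℂ) * Complex.I by
    push_cast; ring]
  exact Complex.norm_exp_ofReal_mul_I _

lemma omega_sum {ω : ℂ} (hprim : IsPrimitiveRoot ω 5) (habs : ‖ω‖ = 1)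
    (a b : ℕ) (ha : a ≤ 2) (hb : b ≤ 2) :
    ∑ s : Fin 5, (ω ^ (s : ℕ)) ^ a * (starRingEnd ℂ) ((ω ^ (s : ℕ)) ^ b)
      = if a = b then 5 else 0 := by
  have hω5 : ω ^ (5:ℕ) = 1 := hprim.pow_eq_one
  have hωne : ω ≠ 0 := fun h => by simp [h] at habs
  have hmc : ω * (starRingEnd ℂ) ω = 1 := by
    rw [Complex.mul_conj, Complex.normSq_eq_norm_sq, habs]; norm_num
  have hconj : (starRingEnd ℂ) ω = ω⁻¹ := eq_inv_of_mul_eq_one_right hmc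
  have hz : ∀ s : ℕ, (ω ^ s) ^ a * (starRingEnd ℂ) ((ω ^ s) ^ b) = (ω ^ ((a:ℤ) - b)) ^ s := by
    intro s
    have hc : (starRingEnd ℂ) ((ω ^ s) ^ b) = (ω ^ (s * b : ℕ))⁻¹ := by
      rw [map_pow, map_pow, hconj, inv_pow, inv_pow, pow_mul]
    rw [hc, ← pow_mul, ← zpow_natCast ω (s * a), ← zpow_natCast ω (s * b), ← _root_.zpow_neg,
      ← zpow_add₀ hωne, ← zpow_natCast (ω ^ ((a:ℤ) - b)) s, ← _root_.zpow_mul]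
    congr 1
    push_cast
    ring
  by_cases hab : a = b
  · subst hab
    rw [if_pos rfl]
    have h1 : ω ^ ((a:ℤ) - a) = 1 := by simp
    calc ∑ s : Fin 5, (ω ^ (s:ℕ)) ^ a * (starRingEnd ℂ) ((ω ^ (s:ℕ)) ^ a)
        = ∑ s : Fin 5, (ω ^ ((a:ℤ) - a)) ^ (s:ℕ) := Finset.sum_congr rfl fun s _ => hz s
      _ = 5 := by rw [h1]; simp
  · rw [if_neg hab]
    have hzne : ω ^ ((a:ℤ) - b) ≠ 1 := by
      intro h
      have := (hprim.zpow_eq_one_iff_dvd _).mp h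
      omega
    have h5 : (ω ^ ((a:ℤ) - b)) ^ (5:ℕ) = 1 := by
      rw [← zpow_natCast (ω ^ ((a:ℤ) - b)) 5, ← _root_.zpow_mul, mul_comm, _root_.zpow_mul,
        zpow_natCast, hω5, _root_.one_zpow]
    calc ∑ s : Fin 5, (ω ^ (s:ℕ)) ^ a * (starRingEnd ℂ) ((ω ^ (s:ℕ)) ^ b)
        = ∑ s : Fin 5, (ω ^ ((a:ℤ) - b)) ^ (s:ℕ) := Finset.sum_congr rfl fun s _ => hz s
      _ = ∑ n ∈ Finset.range 5, (ω ^ ((a:ℤ) - b)) ^ n := Fin.sum_univ_eq_sum_range _ 5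
      _ = 0 := by rw [geom_sum_eq hzne, h5]; simp

lemma comb_iff {d : ℕ} (i j k l : Fin d) :
    (∀ m : Fin d, ((if m = i then 1 else 0) + (if m = l then 1 else 0) : ℕ)
       = (if m = j then 1 else 0) + (if m = k then 1 else 0)) ↔
    ((i = j ∧ l = k) ∨ (i = k ∧ l = j)) := by
  constructor
  · intro h
    by_cases h1 : i = j
    · left
      refine ⟨h1, ?_⟩
      by_contra hlk
      have hl' := h l
      rw [if_pos (rfl : l = l)] at hl'
      subst h1
      split_ifs at hl' <;> omega
    · right
      have hik : i = k := by
        by_contra hik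
        have hi' := h i
        rw [if_pos (rfl : i = i)] at hi'
        split_ifs at hi' <;> omega
      refine ⟨hik, ?_⟩
      by_contra hlj
      have hl' := h l
      rw [if_pos (rfl : l = l)] at hl'
      subst hik
      split_ifs at hl' <;> omega
  · rintro (⟨h1, h2⟩ | ⟨h1, h2⟩) m <;> subst h1 <;> subst h2
    · rfl
    · exact add_comm _ _

lemma scalar_case {R : Type*} [CommRing R] {d : ℕ} (α β : Fin d → R)
    (hβ : ∀ i, β i * β i = α i) (i j k l : Fin d) :
    β i * β j * (β k * β l) * (if (i = j ∧ l = k) ∨ (i = k ∧ l = j) then 1 else 0)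
      = (if i = j ∧ k = l then α i * α k else 0)
        + (if (i = k ∧ j = l) ∧ ¬ i = j then α i * α j else 0) := by
  by_cases h1 : i = j
  · subst h1
    by_cases h2 : k = l
    · subst h2
      rw [if_pos (Or.inl ⟨rfl, rfl⟩), if_pos ⟨rfl, rfl⟩, if_neg (by tauto), mul_one, add_zero,
        ← hβ i, ← hβ k]
    · have hno : ¬((i = i ∧ l = k) ∨ (i = k ∧ l = i)) := by
        rintro (⟨-, h⟩ | ⟨ha, hb⟩)
        · exact h2 h.symm
        · exact h2 (ha.symm.trans hb.symm)
      rw [if_neg hno, if_neg (fun h => h2 h.2), if_neg (by tauto), mul_zero, add_zero]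
  · by_cases h3 : i = k ∧ l = j
    · obtain ⟨h3a, h3b⟩ := h3
      subst h3a
      subst h3b
      rw [if_pos (Or.inr ⟨rfl, rfl⟩), mul_one, if_neg (fun h => h1 h.1),
        if_pos ⟨⟨rfl, rfl⟩, h1⟩, zero_add, ← hβ i, ← hβ l]
      ring
    · have hno : ¬((i = j ∧ l = k) ∨ (i = k ∧ l = j)) := by tauto
      have hno2 : ¬((i = k ∧ j = l) ∧ ¬ i = j) := fun h => h3 ⟨h.1.1, h.1.2.symm⟩
      rw [if_neg hno, if_neg (fun h => h1 h.1), if_neg hno2, mul_zero, add_zero]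

lemma key_sum {d : ℕ} {ω : ℂ} (hprim : IsPrimitiveRoot ω 5) (habs : ‖ω‖ = 1)
    (β : Fin d → ℝ) (i j k l : Fin d) :
    ∑ t : Fin d → Fin 5,
      (((β i : ℝ) : ℂ) * ω ^ ((t i : ℕ)) * (((β j : ℝ) : ℂ) * (starRingEnd ℂ) (ω ^ ((t j : ℕ)))))
        * (starRingEnd ℂ) (((β k : ℝ) : ℂ) * ω ^ ((t k : ℕ)) *
            (((β l : ℝ) : ℂ) * (starRingEnd ℂ) (ω ^ ((t l : ℕ)))))
      = (5:ℂ)^d * (((β i * β j * (β k * β l) : ℝ) : ℂ) *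
          if (i = j ∧ l = k) ∨ (i = k ∧ l = j) then 1 else 0) := by
  classical
  set A : Fin d → ℕ := fun m => (if m = i then 1 else 0) + (if m = l then 1 else 0) with hA
  set B : Fin d → ℕ := fun m => (if m = j then 1 else 0) + (if m = k then 1 else 0) with hB
  have hA2 : ∀ m, A m ≤ 2 := by intro m; simp only [hA]; split_ifs <;> norm_num
  have hB2 : ∀ m, B m ≤ 2 := by intro m; simp only [hB]; split_ifs <;> norm_num
  set g : Fin d → Fin 5 → ℂ :=
    fun m s => (ω ^ (s : ℕ)) ^ (A m) * (starRingEnd ℂ) ((ω ^ (s : ℕ)) ^ (B m)) with hg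
  have hone : ∀ (x : Fin d → ℂ) (i0 : Fin d),
      ∏ m, (x m) ^ (if m = i0 then (1:ℕ) else 0) = x i0 := by
    intro x i0
    have h : ∀ m, (x m) ^ (if m = i0 then (1:ℕ) else 0) = if m = i0 then x m else 1 := by
      intro m; split_ifs <;> simp
    rw [Finset.prod_congr rfl fun m _ => h m]
    simp
  have hterm : ∀ t : Fin d → Fin 5,
      (((β i : ℝ) : ℂ) * ω ^ ((t i : ℕ)) * (((β j : ℝ) : ℂ) * (starRingEnd ℂ) (ω ^ ((t j : ℕ)))))
        * (starRingEnd ℂ) (((β k : ℝ) : ℂ) * ω ^ ((t k : ℕ)) *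
            (((β l : ℝ) : ℂ) * (starRingEnd ℂ) (ω ^ ((t l : ℕ)))))
      = (((β i * β j * (β k * β l) : ℝ)) : ℂ) * ∏ m, g m (t m) := by
    intro t
    have hprod : ∏ m, g m (t m)
        = (ω ^ ((t i : ℕ)) * ω ^ ((t l : ℕ))) *
          ((starRingEnd ℂ) (ω ^ ((t j : ℕ))) * (starRingEnd ℂ) (ω ^ ((t k : ℕ)))) := by
      have h1 : ∀ m, g m (t m) =
          ((ω ^ ((t m : ℕ))) ^ (if m = i then (1:ℕ) else 0) *
           (ω ^ ((t m : ℕ))) ^ (if m = l then (1:ℕ) else 0)) *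
          (((starRingEnd ℂ) (ω ^ ((t m : ℕ)))) ^ (if m = j then (1:ℕ) else 0) *
           ((starRingEnd ℂ) (ω ^ ((t m : ℕ)))) ^ (if m = k then (1:ℕ) else 0)) := by
        intro m
        simp only [hg, hA, hB, pow_add, _root_.map_mul, _root_.map_pow]
      rw [Finset.prod_congr rfl fun m _ => h1 m, Finset.prod_mul_distrib,
        Finset.prod_mul_distrib, Finset.prod_mul_distrib, hone, hone, hone, hone]
    rw [hprod]
    simp only [_root_.map_mul, Complex.conj_conj, Complex.conj_ofReal]
    push_cast
    ring
  rw [Finset.sum_congr rfl fun t _ => hterm t, ← Finset.mul_sum]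
  rw [show (∑ t : Fin d → Fin 5, ∏ m, g m (t m)) = ∏ m, ∑ s, g m s from
    (Fintype.prod_sum g).symm]
  rw [Finset.prod_congr rfl fun m _ =>
    omega_sum hprim habs (A m) (B m) (hA2 m) (hB2 m)]
  have hsplit : (∏ m, if A m = B m then (5:ℂ) else 0)
      = if (∀ m, A m = B m) then (5:ℂ)^d else 0 := by
    by_cases h : ∀ m, A m = B m
    · rw [if_pos h, Finset.prod_congr rfl fun m _ => if_pos (h m)]
      simp
    · rw [if_neg h]
      push_neg at h
      obtain ⟨m0, hm0⟩ := h
      exact Finset.prod_eq_zero (Finset.mem_univ m0) (if_neg hm0)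
  rw [hsplit]
  by_cases hc : (i = j ∧ l = k) ∨ (i = k ∧ l = j)
  · rw [if_pos ((comb_iff i j k l).mpr hc), if_pos hc]; ring
  · rw [if_neg (fun h => hc ((comb_iff i j k l).mp h)), if_neg hc]; ring

theorem optimal_decomposition_pure_state {d : ℕ} (α : Fin d → ℝ)
    (hα : ∀ i, 0 ≤ α i) (hnorm : ∑ i, (α i) ^ 2 = 1)
    (E : ℝ) (hE : E = (∑ i, α i) ^ 2 - 1) (hEpos : 0 < E) :
    let ψ : Fin d × Fin d → ℂ := fun p => if p.1 = p.2 then ((α p.1 : ℝ) : ℂ) else 0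
    let ρm : Matrix (Fin d × Fin d) (Fin d × Fin d) ℂ :=
      ((E : ℂ))⁻¹ • ∑ p : Fin d × Fin d,
        if p.1 ≠ p.2 then ((α p.1 * α p.2 : ℝ) : ℂ) • Matrix.single p p 1 else 0
    let ρp : Matrix (Fin d × Fin d) (Fin d × Fin d) ℂ :=
      (((1 + E : ℝ)) : ℂ)⁻¹ • (vecMulVec ψ (star ψ) + (E : ℂ) • ρm)
    SeparableState ρm ∧ SeparableState ρp ∧
      vecMulVec ψ (star ψ) = ((1 + E : ℝ) : ℂ) • ρp - (E : ℂ) • ρm := by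
  classical
  intro ψ ρm ρp
  have hEne : (E : ℂ) ≠ 0 := Complex.ofReal_ne_zero.mpr hEpos.ne'
  set S : ℝ := ∑ i, α i with hSdef
  have hS2 : 1 + E = S ^ 2 := by rw [hE]; ring
  have hSnn : 0 ≤ S := Finset.sum_nonneg fun i _ => hα i
  have hSpos : 0 < S := by nlinarith
  obtain ⟨ω, hprim, habs⟩ := omega_facts
  set β : Fin d → ℝ := fun i => Real.sqrt (α i) with hβdef
  have hβ : ∀ i, β i * β i = α i := fun i => Real.mul_self_sqrt (hα i)
  -- separability of ρm
  have hsep_m : SeparableState ρm := by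
    apply separable_of_sum (ι := Fin d × Fin d)
      (p := fun q => if q.1 = q.2 then 0 else α q.1 * α q.2 / E)
      (σ := fun q => Matrix.single q.1 q.1 1)
      (τ := fun q => Matrix.single q.2 q.2 1)
    · intro q
      split_ifs
      · exact le_refl 0
      · exact div_nonneg (mul_nonneg (hα _) (hα _)) hEpos.le
    · -- sum of weights is 1
      have hterm : ∀ q : Fin d × Fin d, (if q.1 = q.2 then (0:ℝ) else α q.1 * α q.2 / E)
          = α q.1 * α q.2 / E - (if q.1 = q.2 then α q.1 * α q.2 / E else 0) := by
        intro q; split_ifs <;> simp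
      rw [Finset.sum_congr rfl fun q _ => hterm q, Finset.sum_sub_distrib]
      have h1 : ∑ q : Fin d × Fin d, α q.1 * α q.2 / E = S * S / E := by
        rw [← Finset.sum_div, Fintype.sum_prod_type, ← Finset.sum_mul_sum, ← hSdef]
      have h2 : ∑ q : Fin d × Fin d, (if q.1 = q.2 then α q.1 * α q.2 / E else 0)
          = 1 / E := by
        rw [Fintype.sum_prod_type]
        have hrow : ∀ a : Fin d, (∑ b : Fin d, if a = b then α a * α b / E else 0)
            = α a ^ 2 / E := by
          intro a
          rw [Finset.sum_ite_eq]
          simp [sq]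
        rw [Finset.sum_congr rfl fun a _ => hrow a, ← Finset.sum_div, hnorm]
      rw [h1, h2]
      have hSE : S * S - 1 = E := by rw [hE]; ring
      field_simp
      linarith [hSE]
    · intro q; exact isDensity_stdBasis _
    · intro q; exact isDensity_stdBasis _
    · -- the matrix identity for ρm
      show ρm = _
      simp only [ρm]
      rw [Finset.smul_sum]
      refine Finset.sum_congr rfl fun q _ => ?_
      rw [stdBasis_kron, Prod.mk.eta]
      rcases eq_or_ne q.1 q.2 with h | h
      · rw [if_neg (not_not_intro h), if_pos h]
        simp
      · rw [if_pos h, if_neg h, smul_smul]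
        congr 1
        push_cast
        field_simp
  refine ⟨hsep_m, ?_, ?_⟩
  · -- separability of ρp
    set u : (Fin d → Fin 5) → Fin d → ℂ :=
      fun t m => ((β m : ℝ) : ℂ) * ω ^ ((t m : ℕ)) with hu
    set v : (Fin d → Fin 5) → Fin d → ℂ :=
      fun t m => ((β m : ℝ) : ℂ) * (starRingEnd ℂ) (ω ^ ((t m : ℕ))) with hv
    have hx1 : ∀ s : ℕ, (ω ^ s) * (starRingEnd ℂ) (ω ^ s) = 1 := by
      intro s
      rw [Complex.mul_conj, Complex.normSq_eq_norm_sq, norm_pow, habs]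
      norm_num
    have htr_u : ∀ t, (vecMulVec (u t) (star (u t))).trace = (S : ℂ) := by
      intro t
      rw [trace_vecMulVec_star]
      have : ∀ m : Fin d, u t m * (starRingEnd ℂ) (u t m) = ((α m : ℝ) : ℂ) := by
        intro m
        simp only [hu, _root_.map_mul, Complex.conj_ofReal]
        calc ((β m : ℝ):ℂ) * ω ^ ((t m : ℕ)) * (((β m : ℝ):ℂ) * (starRingEnd ℂ) (ω ^ ((t m : ℕ))))
            = (((β m : ℝ):ℂ) * ((β m : ℝ):ℂ)) * (ω ^ ((t m : ℕ)) * (starRingEnd ℂ) (ω ^ ((t m : ℕ)))) := by ring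
          _ = ((α m : ℝ) : ℂ) := by
              rw [hx1, mul_one, ← Complex.ofReal_mul, hβ]
      rw [Finset.sum_congr rfl fun m _ => this m]
      push_cast [hSdef]
      norm_num
    have htr_v : ∀ t, (vecMulVec (v t) (star (v t))).trace = (S : ℂ) := by
      intro t
      rw [trace_vecMulVec_star]
      have : ∀ m : Fin d, v t m * (starRingEnd ℂ) (v t m) = ((α m : ℝ) : ℂ) := by
        intro m
        simp only [hv, _root_.map_mul, Complex.conj_ofReal, Complex.conj_conj]
        calc ((β m : ℝ):ℂ) * (starRingEnd ℂ) (ω ^ ((t m : ℕ))) * (((β m : ℝ):ℂ) * ω ^ ((t m : ℕ)))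
            = (((β m : ℝ):ℂ) * ((β m : ℝ):ℂ)) * (ω ^ ((t m : ℕ)) * (starRingEnd ℂ) (ω ^ ((t m : ℕ)))) := by ring
          _ = ((α m : ℝ) : ℂ) := by
              rw [hx1, mul_one, ← Complex.ofReal_mul, hβ]
      rw [Finset.sum_congr rfl fun m _ => this m]
      push_cast [hSdef]
      norm_num
    apply separable_of_sum (ι := Fin d → Fin 5)
      (p := fun _ => 1 / 5 ^ d)
      (σ := fun t => ((S⁻¹ : ℝ) : ℂ) • vecMulVec (u t) (star (u t)))
      (τ := fun t => ((S⁻¹ : ℝ) : ℂ) • vecMulVec (v t) (star (v t)))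
    · intro t; positivity
    · rw [Finset.sum_const, Finset.card_univ,
        show Fintype.card (Fin d → Fin 5) = 5 ^ d by simp [Fintype.card_fun],
        nsmul_eq_mul]
      push_cast
      field_simp
    · intro t
      constructor
      · exact posSemidef_real_smul (posSemidef_vecMulVec_star _) (inv_nonneg.mpr hSnn)
      · rw [Matrix.trace_smul, htr_u, smul_eq_mul, ← Complex.ofReal_mul,
          inv_mul_cancel₀ hSpos.ne', Complex.ofReal_one]
    · intro t
      constructor
      · exact posSemidef_real_smul (posSemidef_vecMulVec_star _) (inv_nonneg.mpr hSnn)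
      · rw [Matrix.trace_smul, htr_v, smul_eq_mul, ← Complex.ofReal_mul,
          inv_mul_cancel₀ hSpos.ne', Complex.ofReal_one]
    · -- the matrix identity for ρp
      have hErm : (E : ℂ) • ρm = ∑ p : Fin d × Fin d,
          if p.1 ≠ p.2 then ((α p.1 * α p.2 : ℝ) : ℂ) • Matrix.single p p 1 else 0 := by
        simp only [ρm]
        rw [smul_smul, mul_inv_cancel₀ hEne, one_smul]
      have hW : ∑ t : Fin d → Fin 5,
            vecMulVec (fun p : Fin d × Fin d => u t p.1 * v t p.2)
              (star fun p : Fin d × Fin d => u t p.1 * v t p.2)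
          = ((5:ℂ)^d) • (vecMulVec ψ (star ψ) + (E : ℂ) • ρm) := by
        rw [hErm]
        ext pq rs
        obtain ⟨i, j⟩ := pq
        obtain ⟨k, l⟩ := rs
        rw [Matrix.sum_apply]
        have hLHS : ∀ t : Fin d → Fin 5,
            (vecMulVec (fun p : Fin d × Fin d => u t p.1 * v t p.2)
              (star fun p : Fin d × Fin d => u t p.1 * v t p.2)) (i,j) (k,l)
            = (u t i * v t j) * (starRingEnd ℂ) (u t k * v t l) := by
          intro t
          simp [vecMulVec_apply, Pi.star_apply, Complex.star_def]
        rw [Finset.sum_congr rfl fun t _ => hLHS t]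
        have hkey := key_sum hprim habs β i j k l
        simp only [hu, hv]
        rw [hkey]
        -- now compute the RHS entry
        have hψ1 : ψ (i,j) = if i = j then ((α i : ℝ):ℂ) else 0 := rfl
        have hψ2 : (star ψ) (k,l) = if k = l then ((α k : ℝ):ℂ) else 0 := by
          simp only [Pi.star_apply, Complex.star_def, ψ]
          rw [apply_ite (starRingEnd ℂ), Complex.conj_ofReal, map_zero]
        have hstd : ∀ (p x y : Fin d × Fin d),
            Matrix.single p p (1:ℂ) x y = if p = x ∧ p = y then 1 else 0 :=
          fun p x y => rfl
        have hrm_entry : (∑ p : Fin d × Fin d,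
            if p.1 ≠ p.2 then ((α p.1 * α p.2 : ℝ) : ℂ) • Matrix.single p p 1 else 0)
              (i,j) (k,l)
            = if (i = k ∧ j = l) ∧ ¬ i = j then ((α i : ℝ):ℂ) * ((α j : ℝ):ℂ) else 0 := by
          rw [Matrix.sum_apply]
          have hterm : ∀ p : Fin d × Fin d,
              (if p.1 ≠ p.2 then ((α p.1 * α p.2 : ℝ) : ℂ) • Matrix.single p p 1 else 0)
                (i,j) (k,l)
              = if p = (i,j) ∧ p = (k,l) ∧ p.1 ≠ p.2
                  then ((α p.1 : ℝ):ℂ) * ((α p.2 : ℝ):ℂ) else 0 := by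
            intro p
            by_cases hc : p.1 ≠ p.2
            · rw [if_pos hc, Matrix.smul_apply, hstd]
              by_cases h1 : p = (i,j) ∧ p = (k,l)
              · rw [if_pos h1, if_pos ⟨h1.1, h1.2, hc⟩, smul_eq_mul, mul_one]
                push_cast
                ring
              · rw [if_neg h1, if_neg (fun h => h1 ⟨h.1, h.2.1⟩), smul_zero]
            · rw [if_neg hc, if_neg (fun h => hc h.2.2), Matrix.zero_apply]
          rw [Finset.sum_congr rfl fun p _ => hterm p]
          rw [Finset.sum_eq_single ((i,j) : Fin d × Fin d)]
          · simp only [Prod.mk.injEq]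
            by_cases h1 : i = k <;> by_cases h2 : j = l <;> by_cases h3 : i = j <;>
              simp [h1, h2, h3]
          · intro p _ hp
            exact if_neg (fun h => hp h.1)
          · intro h
            exact absurd (Finset.mem_univ _) h
        rw [Matrix.smul_apply, Matrix.add_apply, hrm_entry]
        rw [Matrix.vecMulVec_apply, hψ1, hψ2]
        have hsc := scalar_case (R := ℂ) (fun m => ((α m : ℝ):ℂ)) (fun m => ((β m : ℝ):ℂ))
          (fun m => by rw [← Complex.ofReal_mul, hβ]) i j k l
        have hmul : (if i = j then ((α i : ℝ):ℂ) else 0) * (if k = l then ((α k : ℝ):ℂ) else 0)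
            = if i = j ∧ k = l then ((α i : ℝ):ℂ) * ((α k : ℝ):ℂ) else 0 := by
          by_cases h1 : i = j <;> by_cases h2 : k = l <;> simp [h1, h2]
        rw [smul_eq_mul, hmul, ← hsc]
        congr 2
        push_cast
        ring
      show ρp = _
      simp only [ρp]
      have hstep : ∀ t : Fin d → Fin 5,
          ((1 / 5 ^ d : ℝ) : ℂ) • ((((S⁻¹ : ℝ) : ℂ) • vecMulVec (u t) (star (u t))) ⊗ₖ
            (((S⁻¹ : ℝ) : ℂ) • vecMulVec (v t) (star (v t))))
          = (((5:ℂ)^d)⁻¹ * ((S:ℂ))⁻¹ * ((S:ℂ))⁻¹) •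
              vecMulVec (fun p : Fin d × Fin d => u t p.1 * v t p.2)
                (star fun p : Fin d × Fin d => u t p.1 * v t p.2) := by
        intro t
        rw [Matrix.smul_kronecker, Matrix.kronecker_smul, vecMulVec_kron, smul_smul, smul_smul]
        congr 1
        push_cast
        ring
      rw [Finset.sum_congr rfl fun t _ => hstep t, ← Finset.smul_sum, hW]
      conv_rhs => rw [smul_smul]
      congr 1
      have h5 : ((5:ℂ)^d) ≠ 0 := by positivity
      have hSne : (S : ℂ) ≠ 0 := Complex.ofReal_ne_zero.mpr hSpos.ne'
      have h1E : ((1 + E : ℝ) : ℂ) = (S : ℂ) * S := by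
        rw [hS2]
        push_cast
        ring
      have hrearr : ((5:ℂ)^d)⁻¹ * ((S:ℂ))⁻¹ * ((S:ℂ))⁻¹ * (5:ℂ)^d
          = ((S:ℂ))⁻¹ * ((S:ℂ))⁻¹ * (((5:ℂ)^d)⁻¹ * (5:ℂ)^d) := by ring
      rw [hrearr, inv_mul_cancel₀ h5, mul_one, h1E, mul_inv]
  · -- the decomposition identity
    have h1E : ((1 + E : ℝ) : ℂ) ≠ 0 := Complex.ofReal_ne_zero.mpr (by positivity)
    have : ((1 + E : ℝ) : ℂ) • ρp = vecMulVec ψ (star ψ) + (E : ℂ) • ρm := by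
      simp only [ρp]
      rw [smul_smul, mul_inv_cancel₀ h1E, one_smul]
    rw [this, add_sub_cancel_right]
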